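/- For all real numbers a, b ≥ 0 and t ∈ [0,1], the quantity h(a,b,t) := a⁴ + b⁴ − 2(ab)² t² − (1/2) a² (a² + b² − 2abt) is nonnegative. -/
import Mathlib


theorem stmt_1 (a b t : ℝ) (ha : 0 ≤ a) (hb : 0 ≤ b) (ht : t ∈ Set.Icc (0:ℝ) 1) :
    0 ≤ a^4 + b^4 - 2*(a*b)^2*t^2 - (1/2)*a^2*(a^2 + b^2 - 2*a*b*t) := by
  obtain ⟨h0, h1⟩ := ht
  nlinarith [sq_nonneg (a^2 - b^2), sq_nonneg (a*b*(1-t)), sq_nonneg (a*b*t), mul_nonneg (mul_nonneg ha hb) h0, sq_nonneg (a-b), mul_nonneg (mul_nonneg (mul_nonneg ha hb) (sub_nonneg.2 h1)) h0, sq_nonneg (a^2 - a*b*t), sq_nonneg (b^2 - a*b*t), sq_nonneg (a^2 + b^2 - 2*a*b*t)]
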